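/- In the sophisticated rock-throwing model, in the context u where ST = 1 and BT = 1 (so SH = 1, BH = 0, BS = 1 in the unique solution): ST = 1 is a cause of BS = 1 in (M,u) with dr((M,u), ST = 1, BS = 1) = 1, while BT = 1 is not a cause of BS = 1 in (M,u), so dr((M,u), BT = 1, BS = 1) = 0. -/

import Mathlib

open Classical

/-- A causal model over exogenous variables `U` and endogenous variables `V`,
with integer-valued variables.  `Rexo Y` / `R X` are the (intended) ranges of
the variables, and `F X` is the structural equation for the endogenous
variable `X`, giving its value as a function of the values of all other
variables. -/
structure CausalModel (U V : Type) where
  Rexo : U → Set ℤ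
  R : V → Set ℤ
  F : V → (U → ℤ) → (V → ℤ) → ℤ

namespace CausalModel

variable {U V : Type}

/-- A causal model is recursive if the variables can be ordered so that each
structural equation depends only on the values of strictly earlier endogenous
variables (equivalently, the dependency graph is acyclic). -/
def Recursive (M : CausalModel U V) : Prop :=
  ∃ ord : V → ℕ, ∀ (X : V) (u : U → ℤ) (g g' : V → ℤ),
    (∀ Y, ord Y < ord X → g Y = g' Y) → M.F X u g = M.F X u g'

/-- `s` simultaneously satisfies all the structural equations in context `u`. -/
def IsSolution (M : CausalModel U V) (u : U → ℤ) (s : V → ℤ) : Prop :=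
  ∀ X, s X = M.F X u s

/-- The (unique, for recursive models) solution of the equations in context `u`. -/
noncomputable def solution (M : CausalModel U V) (u : U → ℤ) : V → ℤ :=
  Classical.epsilon fun s => M.IsSolution u s

/-- The model `M_{A ← y}` obtained by replacing the equations of the variables
in `A` by the constant values given by `y`. -/
noncomputable def intervene (M : CausalModel U V) (A : Set V) (y : V → ℤ) :
    CausalModel U V where
  Rexo := M.Rexo
  R := M.R
  F := fun X u g => if X ∈ A then y X else M.F X u g

end CausalModel

/-- Boolean combinations of primitive events `X = x`. -/
inductive CausalFormula (V : Type) where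
  | tru : CausalFormula V
  | eq : V → ℤ → CausalFormula V
  | not : CausalFormula V → CausalFormula V
  | and : CausalFormula V → CausalFormula V → CausalFormula V
  | or : CausalFormula V → CausalFormula V → CausalFormula V
  | iff : CausalFormula V → CausalFormula V → CausalFormula V

/-- Truth of a causal formula under an assignment to the endogenous variables. -/
def CausalFormula.holds {V : Type} (s : V → ℤ) : CausalFormula V → Prop
  | tru => True
  | eq X x => s X = x
  | not φ => ¬ φ.holds s
  | and φ χ => φ.holds s ∧ χ.holds s
  | or φ χ => φ.holds s ∨ χ.holds s
  | iff φ χ => φ.holds s ↔ χ.holds s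

/-- `(M,u) ⊨ [A ← y] φ` : `φ` holds in the unique solution of `M_{A ← y}` in
context `u`. -/
def sat {U V : Type} (M : CausalModel U V) (u : U → ℤ) (A : Set V) (y : V → ℤ)
    (φ : CausalFormula V) : Prop :=
  φ.holds ((M.intervene A y).solution u)

/-- Condition AC2 of the Halpern–Pearl definition of causality, for the single
conjunct `X = x`, witnessed by the partition `(Wᶜ, W)` (so `Z = Wᶜ ∋ X`) and
the setting `(x', w')` of `(X, W)`. -/
def AC2 {U V : Type} (M : CausalModel U V) (u : U → ℤ) (X : V) (x : ℤ)
    (φ : CausalFormula V) (W : Set V) (x' : ℤ) (w' : V → ℤ) : Prop :=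
  X ∉ W ∧ x' ∈ M.R X ∧ (∀ Y ∈ W, w' Y ∈ M.R Y) ∧
  -- AC2(a): (M,u) ⊨ [X ← x', W ← w'] ¬φ
  ¬ sat M u (insert X W) (fun Y => if Y = X then x' else w' Y) φ ∧
  -- AC2(b): (M,u) ⊨ [X ← x, W ← w', Z' ← z*] φ for all subsets Z' of Z = Wᶜ
  ∀ Z' : Set V, Z' ⊆ Wᶜ →
    sat M u (insert X (W ∪ Z'))
      (fun Y => if Y = X then x else if Y ∈ W then w' Y else M.solution u Y) φ

/-- `X = x` is a cause of `φ` in `(M,u)`: AC1 together with AC2 (AC3 is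
automatic for single conjuncts). -/
def IsCause {U V : Type} (M : CausalModel U V) (u : U → ℤ) (X : V) (x : ℤ)
    (φ : CausalFormula V) : Prop :=
  (M.solution u X = x ∧ φ.holds (M.solution u)) ∧
  ∃ W x' w', AC2 M u X x φ W x' w'

/-- The degree of responsibility of `X = x` for `φ` in `(M,u)` : `0` if
`X = x` is not a cause of `φ`, and otherwise `1/(k+1)` where `k` is the
minimal, over all AC2 witnesses, number of variables of `W` whose value in
`w'` differs from their value in the unique solution of `(M,u)`. -/
noncomputable def dr {U V : Type} (M : CausalModel U V) (u : U → ℤ) (X : V)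
    (x : ℤ) (φ : CausalFormula V) : ℚ :=
  if IsCause M u X x φ then
    1 / ((sInf {k : ℕ | ∃ W x' w', AC2 M u X x φ W x' w' ∧
        {Y | Y ∈ W ∧ w' Y ≠ M.solution u Y}.ncard = k} : ℕ) + 1 : ℚ)
  else 0

/-- Variables of the sophisticated rock-throwing model. -/
inductive RockVar2 : Type where
  | ST : RockVar2
  | BT : RockVar2
  | SH : RockVar2
  | BH : RockVar2
  | BS : RockVar2
deriving DecidableEq

/-- The sophisticated rock-throwing model: `ST` and `BT` copy values
determined by the exogenous context, `SH = ST`, `BH = 1` iff `BT = 1` and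
`SH = 0`, and `BS = 1` iff `SH = 1` or `BH = 1`. -/
def sophRock : CausalModel (Fin 2) RockVar2 where
  Rexo := fun _ => {0, 1}
  R := fun _ => {0, 1}
  F := fun X u g =>
    match X with
    | .ST => u 0
    | .BT => u 1
    | .SH => g .ST
    | .BH => if g .BT = 1 ∧ g .SH = 0 then 1 else 0
    | .BS => if g .SH = 1 ∨ g .BH = 1 then 1 else 0

/- ### Auxiliary machinery -/

lemma solution_unique {U V : Type} (M : CausalModel U V) (u : U → ℤ) (s : V → ℤ)
    (hs : M.IsSolution u s) (huniq : ∀ t, M.IsSolution u t → t = s) :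
    M.solution u = s :=
  huniq _ (Classical.epsilon_spec (⟨s, hs⟩ : ∃ t, M.IsSolution u t))

noncomputable def solST (A : Set RockVar2) (y : RockVar2 → ℤ) (u : Fin 2 → ℤ) : ℤ :=
  if RockVar2.ST ∈ A then y RockVar2.ST else u 0

noncomputable def solBT (A : Set RockVar2) (y : RockVar2 → ℤ) (u : Fin 2 → ℤ) : ℤ :=
  if RockVar2.BT ∈ A then y RockVar2.BT else u 1

noncomputable def solSH (A : Set RockVar2) (y : RockVar2 → ℤ) (u : Fin 2 → ℤ) : ℤ :=
  if RockVar2.SH ∈ A then y RockVar2.SH else solST A y u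

noncomputable def solBH (A : Set RockVar2) (y : RockVar2 → ℤ) (u : Fin 2 → ℤ) : ℤ :=
  if RockVar2.BH ∈ A then y RockVar2.BH
  else if solBT A y u = 1 ∧ solSH A y u = 0 then 1 else 0

noncomputable def solBS (A : Set RockVar2) (y : RockVar2 → ℤ) (u : Fin 2 → ℤ) : ℤ :=
  if RockVar2.BS ∈ A then y RockVar2.BS
  else if solSH A y u = 1 ∨ solBH A y u = 1 then 1 else 0

noncomputable def sophSol (A : Set RockVar2) (y : RockVar2 → ℤ) (u : Fin 2 → ℤ) :
    RockVar2 → ℤ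
  | .ST => solST A y u
  | .BT => solBT A y u
  | .SH => solSH A y u
  | .BH => solBH A y u
  | .BS => solBS A y u

lemma soph_solution (A : Set RockVar2) (y : RockVar2 → ℤ) (u : Fin 2 → ℤ) :
    (sophRock.intervene A y).solution u = sophSol A y u := by
  apply solution_unique
  · intro X
    cases X <;>
      simp [sophSol, CausalModel.IsSolution, CausalModel.intervene, sophRock,
        solST, solBT, solSH, solBH, solBS] <;> split_ifs <;> rfl
  · intro t ht
    have hST : t .ST = solST A y u := by
      have := ht .ST
      simpa [CausalModel.intervene, sophRock, solST] using this
    have hBT : t .BT = solBT A y u := by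
      have := ht .BT
      simpa [CausalModel.intervene, sophRock, solBT] using this
    have hSH : t .SH = solSH A y u := by
      have := ht .SH
      simp only [CausalModel.intervene, sophRock] at this
      rw [hST] at this
      simpa [solSH] using this
    have hBH : t .BH = solBH A y u := by
      have := ht .BH
      simp only [CausalModel.intervene, sophRock] at this
      rw [hBT, hSH] at this
      simpa [solBH] using this
    have hBS : t .BS = solBS A y u := by
      have := ht .BS
      simp only [CausalModel.intervene, sophRock] at this
      rw [hSH, hBH] at this
      simpa [solBS] using this
    funext X
    cases X <;> simp [sophSol, hST, hBT, hSH, hBH, hBS]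

/-- The baseline solution when both throw. -/
lemma soph_solution_base (u : Fin 2 → ℤ) (h0 : u 0 = 1) (h1 : u 1 = 1) :
    sophRock.solution u = fun X => match X with
      | RockVar2.BH => 0
      | _ => 1 := by
  apply solution_unique
  · intro X
    cases X <;> simp [CausalModel.IsSolution, sophRock, h0, h1]
  · intro t ht
    have hST : t .ST = 1 := by simpa [sophRock, h0] using ht .ST
    have hBT : t .BT = 1 := by simpa [sophRock, h1] using ht .BT
    have hSH : t .SH = 1 := by
      have := ht .SH; simp only [sophRock] at this; rw [hST] at this; exact this
    have hBH : t .BH = 0 := by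
      have := ht .BH; simp only [sophRock] at this; rw [hBT, hSH] at this
      simpa using this
    have hBS : t .BS = 1 := by
      have := ht .BS; simp only [sophRock] at this; rw [hSH, hBH] at this
      simpa using this
    funext X
    cases X <;> simp [hST, hBT, hSH, hBH, hBS]

lemma sat_iff (u : Fin 2 → ℤ) (A : Set RockVar2) (y : RockVar2 → ℤ) (z : ℤ) :
    sat sophRock u A y (CausalFormula.eq RockVar2.BS z) ↔ solBS A y u = z := by
  rw [sat, soph_solution]
  rfl

/-- The AC2 witness for `ST = 1`. -/
lemma ST_AC2 (u : Fin 2 → ℤ) (h0 : u 0 = 1) (h1 : u 1 = 1) :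
    AC2 sophRock u RockVar2.ST 1 (CausalFormula.eq RockVar2.BS 1)
      {RockVar2.BH} 0 (fun _ => 0) := by
  refine ⟨by simp, by simp [sophRock], by simp [sophRock], ?_, ?_⟩
  · rw [sat_iff]
    simp [solBS, solSH, solST, solBH]
  · intro Z' hZ'
    rw [sat_iff]
    have hBHZ : RockVar2.BH ∉ Z' := fun h => by simpa using hZ' h
    rw [soph_solution_base u h0 h1]
    by_cases hBSZ : RockVar2.BS ∈ Z'
    · simp [solBS, hBSZ]
    · by_cases hSHZ : RockVar2.SH ∈ Z' <;>
        simp [solBS, solSH, solST, solBH, hBSZ, hSHZ, hBHZ]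


/-- `BT = 1` is not a cause of `BS = 1`. -/
lemma BT_not_cause (u : Fin 2 → ℤ) (h0 : u 0 = 1) (h1 : u 1 = 1) :
    ¬ IsCause sophRock u RockVar2.BT 1 (CausalFormula.eq RockVar2.BS 1) := by
  rintro ⟨-, W, x', w', hBTW, hx', hwR, ha, hb⟩
  rw [sat_iff] at ha
  have hb0 := hb ∅ (Set.empty_subset _)
  have hb1 := hb ({RockVar2.BH} \ W) (fun x hx => by
    simp only [Set.mem_diff, Set.mem_compl_iff] at hx ⊢
    exact hx.2)
  rw [sat_iff, Set.union_empty] at hb0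
  rw [sat_iff, Set.union_diff_self] at hb1
  rw [soph_solution_base u h0 h1] at hb0 hb1
  by_cases hBS : RockVar2.BS ∈ W
  · simp [solBS, hBS] at ha hb0
    exact ha hb0
  · by_cases hSH : RockVar2.SH ∈ W <;> by_cases hST : RockVar2.ST ∈ W <;>
      by_cases hBH : RockVar2.BH ∈ W <;>
      simp [solBS, solSH, solST, solBT, solBH, hSH, hST, hBH, hBS, hBTW, h0, h1] at ha hb1 <;>
      omega

/-- In the sophisticated rock-throwing model, in the context where both Suzy
and Billy throw: `ST = 1` is a cause of `BS = 1` with degree of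
responsibility `1`, while `BT = 1` is not a cause of `BS = 1` and has degree
of responsibility `0`. -/
theorem sophRock_responsibility (u : Fin 2 → ℤ) (h0 : u 0 = 1) (h1 : u 1 = 1) :
    IsCause sophRock u RockVar2.ST 1 (CausalFormula.eq RockVar2.BS 1) ∧
    dr sophRock u RockVar2.ST 1 (CausalFormula.eq RockVar2.BS 1) = 1 ∧
    ¬ IsCause sophRock u RockVar2.BT 1 (CausalFormula.eq RockVar2.BS 1) ∧
    dr sophRock u RockVar2.BT 1 (CausalFormula.eq RockVar2.BS 1) = 0 := by
  have hz := soph_solution_base u h0 h1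
  have hcause : IsCause sophRock u RockVar2.ST 1 (CausalFormula.eq RockVar2.BS 1) :=
    ⟨⟨by rw [hz], by show sophRock.solution u RockVar2.BS = 1; rw [hz]⟩,
      {RockVar2.BH}, 0, fun _ => 0, ST_AC2 u h0 h1⟩
  refine ⟨hcause, ?_, BT_not_cause u h0 h1, ?_⟩
  · rw [dr, if_pos hcause]
    have hinf : sInf {k : ℕ | ∃ W x' w',
        AC2 sophRock u RockVar2.ST 1 (CausalFormula.eq RockVar2.BS 1) W x' w' ∧
        {Y | Y ∈ W ∧ w' Y ≠ sophRock.solution u Y}.ncard = k} = 0 := by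
      refine Nat.sInf_eq_zero.mpr (Or.inl ?_)
      refine ⟨{RockVar2.BH}, 0, fun _ => 0, ST_AC2 u h0 h1, ?_⟩
      have he : {Y | Y ∈ ({RockVar2.BH} : Set RockVar2) ∧
          (fun _ => (0:ℤ)) Y ≠ sophRock.solution u Y} = ∅ := by
        rw [Set.eq_empty_iff_forall_notMem]
        rintro Y ⟨rfl, hne⟩
        exact hne (by rw [hz])
      rw [he]
      simp
    rw [hinf]
    norm_num
  · rw [dr, if_neg (BT_not_cause u h0 h1)]
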